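/- Let a be an even positive integer and b ∈ ℝ with a(a-1) ≥ 0 and a·b·(a+b-1) ≤ 0. Then the function η(v,m) = v^a m^b is convex on the domain {(v,m) : v ∈ ℝ, m > 0}, i.e., its Hessian matrix is positive semidefinite at every point of this domain. -/

import Mathlib

open Real Set

private lemma quad_nonneg (A B C x y : ℝ) (hA : 0 ≤ A) (hC : 0 ≤ C) (hD : B^2 ≤ A*C) :
    0 ≤ A*x^2 + 2*B*(x*y) + C*y^2 := by
  rcases eq_or_lt_of_le hA with hA0 | hA0
  · have hB : B = 0 := by nlinarith [sq_nonneg B]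
    rw [hB, ← hA0]
    nlinarith [sq_nonneg y]
  · nlinarith [sq_nonneg (A*x + B*y), mul_nonneg (sub_nonneg.2 hD) (sq_nonneg y)]

private lemma oned (a : ℕ) (b : ℝ) (ha : Even a) (ha2 : 2 ≤ a)
    (h2 : (a:ℝ) * b * ((a:ℝ) + b - 1) ≤ 0) (hb : b ≤ 0)
    (p1 d1 p2 d2 : ℝ) :
    ConvexOn ℝ {t : ℝ | 0 < p2 + t*d2}
      (fun t => (p1 + t*d1)^a * (p2 + t*d2)^b) := by
  set u : ℝ → ℝ := fun t => p1 + t*d1 with hu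
  set m : ℝ → ℝ := fun t => p2 + t*d2 with hm
  set S : Set ℝ := {t : ℝ | 0 < p2 + t*d2} with hS
  have hSopen : IsOpen S := isOpen_Ioi.preimage (by continuity : Continuous m)
  have hSconv : Convex ℝ S := by
    intro x hx y hy α β hα hβ hαβ
    simp only [hS, mem_setOf_eq, smul_eq_mul] at hx hy ⊢
    have key : p2 + (α * x + β * y) * d2 = α * (p2 + x*d2) + β * (p2 + y*d2) := by
      linear_combination (-p2) * hαβ
    rw [key]
    rcases hα.eq_or_lt with h | h
    · rw [← h] at hαβ ⊢
      simp at hαβ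
      simpa [hαβ] using hy
    · have := mul_nonneg hβ hy.le
      nlinarith [mul_pos h hx]
  -- derivatives
  have hca1 : ((a-1 : ℕ) : ℝ) = (a:ℝ) - 1 := by
    rw [Nat.cast_sub (by omega)]; norm_num
  have hca2 : ((a-2 : ℕ) : ℝ) = (a:ℝ) - 2 := by
    rw [Nat.cast_sub (by omega)]; norm_num
  set g : ℝ → ℝ := fun t => u t ^ a * m t ^ b with hg
  set g1 : ℝ → ℝ := fun t =>
    ((a:ℝ)*d1) * (u t^(a-1) * m t^b) + (b*d2) * (u t^a * m t^(b-1)) with hg1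
  set g2 : ℝ → ℝ := fun t =>
    ((a:ℝ)*((a:ℝ)-1)) * (u t^(a-2) * m t^b) * d1^2
    + 2*((a:ℝ)*b) * (u t^(a-1) * m t^(b-1)) * (d1*d2)
    + (b*(b-1)) * (u t^a * m t^(b-2)) * d2^2 with hg2
  have hud : ∀ t : ℝ, HasDerivAt u d1 t := by
    intro t
    exact (((hasDerivAt_id t).mul_const d1).const_add p1).congr_deriv (one_mul d1)
  have hmd : ∀ t : ℝ, HasDerivAt m d2 t := by
    intro t
    exact (((hasDerivAt_id t).mul_const d2).const_add p2).congr_deriv (one_mul d2)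
  have hmpos : ∀ t ∈ S, 0 < m t := fun t ht => ht
  have hgd : ∀ t ∈ S, HasDerivAt g (g1 t) t := by
    intro t ht
    have h1 := ((hud t).pow a).mul ((hmd t).rpow_const (p := b) (Or.inl (hmpos t ht).ne'))
    refine h1.congr_deriv ?_
    simp only [hg1, hca1, Pi.pow_apply]
    ring
  have hg1d : ∀ t ∈ S, HasDerivAt g1 (g2 t) t := by
    intro t ht
    have hmne := (hmpos t ht).ne'
    have t1 := (((hud t).pow (a-1)).mul ((hmd t).rpow_const (p := b) (Or.inl hmne))).const_mul
      ((a:ℝ)*d1)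
    have t2 := (((hud t).pow a).mul ((hmd t).rpow_const (p := b-1) (Or.inl hmne))).const_mul (b*d2)
    have := t1.add t2
    refine this.congr_deriv ?_
    simp only [hg2, hca1, hca2, Pi.pow_apply, show a-1-1 = a-2 from by omega,
      show b-1-1 = b-2 from by ring]
    ring
  -- second derivative nonnegativity
  have hg2nn : ∀ t ∈ S, 0 ≤ g2 t := by
    intro t ht
    have hmt := hmpos t ht
    have hA : 0 ≤ ((a:ℝ)*((a:ℝ)-1)) * (u t^(a-2) * m t^b) := by
      have h1 : (0:ℝ) ≤ (a:ℝ)*((a:ℝ)-1) := by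
        have : (2:ℝ) ≤ (a:ℝ) := by exact_mod_cast ha2
        nlinarith
      exact mul_nonneg h1 (mul_nonneg ((ha.tsub even_two).pow_nonneg _)
        (rpow_pos_of_pos hmt b).le)
    have hC : 0 ≤ (b*(b-1)) * (u t^a * m t^(b-2)) := by
      have h1 : (0:ℝ) ≤ b*(b-1) := by nlinarith
      exact mul_nonneg h1 (mul_nonneg (ha.pow_nonneg _) (rpow_pos_of_pos hmt _).le)
    have hB2 : (((a:ℝ)*b) * (u t^(a-1) * m t^(b-1)))^2 ≤
        (((a:ℝ)*((a:ℝ)-1)) * (u t^(a-2) * m t^b)) * ((b*(b-1)) * (u t^a * m t^(b-2))) := by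
      have e1 : u t^(a-2) * u t^a = (u t^(a-1))^2 := by
        rw [← pow_add, ← pow_mul]
        congr 1
        omega
      have e2 : m t^b * m t^(b-2) = (m t^(b-1))^2 := by
        rw [← rpow_add hmt, ← rpow_natCast (m t^(b-1)) 2, ← rpow_mul hmt.le]
        norm_num
        ring_nf
      have hcoef : ((a:ℝ)*b)^2 ≤ ((a:ℝ)*((a:ℝ)-1)) * (b*(b-1)) := by nlinarith [h2]
      have hQ : (0:ℝ) ≤ (u t^(a-1))^2 * (m t^(b-1))^2 :=
        mul_nonneg (sq_nonneg _) (sq_nonneg _)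
      calc (((a:ℝ)*b) * (u t^(a-1) * m t^(b-1)))^2
          = ((a:ℝ)*b)^2 * ((u t^(a-1))^2 * (m t^(b-1))^2) := by ring
        _ ≤ (((a:ℝ)*((a:ℝ)-1)) * (b*(b-1))) * ((u t^(a-1))^2 * (m t^(b-1))^2) :=
            mul_le_mul_of_nonneg_right hcoef hQ
        _ = (((a:ℝ)*((a:ℝ)-1)) * (u t^(a-2) * m t^b)) * ((b*(b-1)) * (u t^a * m t^(b-2))) := by
            rw [show (((a:ℝ)*((a:ℝ)-1)) * (u t^(a-2) * m t^b)) * ((b*(b-1)) * (u t^a * m t^(b-2)))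
              = (((a:ℝ)*((a:ℝ)-1)) * (b*(b-1))) * ((u t^(a-2) * u t^a) * (m t^b * m t^(b-2)))
              from by ring, e1, e2]
    have := quad_nonneg _ _ _ d1 d2 hA hC hB2
    simpa only [hg2, mul_assoc, mul_comm, mul_left_comm] using this
  -- assemble
  have hderiv_eq : ∀ t ∈ S, deriv g t = g1 t := fun t ht => (hgd t ht).deriv
  have hdiff : DifferentiableOn ℝ g S := fun t ht => ((hgd t ht).differentiableAt).differentiableWithinAt
  have hdiff2 : DifferentiableOn ℝ (deriv g) S := by
    intro t ht
    have : HasDerivAt (deriv g) (g2 t) t := by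
      refine (hg1d t ht).congr_of_eventuallyEq ?_
      filter_upwards [hSopen.mem_nhds ht] with x hx using (hderiv_eq x hx)
    exact this.differentiableAt.differentiableWithinAt
  have key := convexOn_of_deriv2_nonneg' hSconv hdiff hdiff2 ?_
  · exact key
  · intro t ht
    have : deriv (deriv g) t = g2 t := by
      have h : HasDerivAt (deriv g) (g2 t) t := by
        refine (hg1d t ht).congr_of_eventuallyEq ?_
        filter_upwards [hSopen.mem_nhds ht] with x hx using (hderiv_eq x hx)
      exact h.deriv
    have h2' : deriv^[2] g t = deriv (deriv g) t := rfl
    rw [h2', this]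
    exact hg2nn t ht

/-- for a an even positive integer and b real with a(a-1) ≥ 0 and
a b (a+b-1) ≤ 0, the function η(v,m) = v^a m^b is convex on {(v,m) : m > 0}. -/
theorem power_entropy_convex (a : ℕ) (b : ℝ) (ha : Even a) (hapos : 0 < a)
    (h1 : (a : ℝ) * ((a : ℝ) - 1) ≥ 0)
    (h2 : (a : ℝ) * b * ((a : ℝ) + b - 1) ≤ 0) :
    ConvexOn ℝ {p : ℝ × ℝ | 0 < p.2} (fun p : ℝ × ℝ => p.1 ^ a * p.2 ^ b) := by
  have ha2 : 2 ≤ a := by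
    rcases ha with ⟨k, rfl⟩; omega
  have haR : (2:ℝ) ≤ (a:ℝ) := by exact_mod_cast ha2
  have hb : b ≤ 0 := by
    by_contra hb'
    push_neg at hb'
    have := mul_pos (mul_pos (show (0:ℝ) < (a:ℝ) by linarith) hb')
      (show (0:ℝ) < (a:ℝ)+b-1 by linarith)
    linarith
  constructor
  · exact convex_halfSpace_gt ⟨fun _ _ => rfl, fun _ _ => rfl⟩ 0
  · intro p hp q hq α β hα hβ hαβ
    have h0 : (0:ℝ) ∈ {t : ℝ | 0 < p.2 + t*(q.2-p.2)} := by simpa using hp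
    have h1' : (1:ℝ) ∈ {t : ℝ | 0 < p.2 + t*(q.2-p.2)} := by
      simp only [Set.mem_setOf_eq, one_mul]
      simpa using hq
    have hineq := (oned a b ha ha2 h2 hb p.1 (q.1-p.1) p.2 (q.2-p.2)).2 h0 h1' hα hβ hαβ
    simp only [smul_eq_mul, mul_zero, mul_one, zero_add, zero_mul, add_zero, one_mul,
      add_sub_cancel] at hineq
    simp only [Prod.fst_add, Prod.snd_add, Prod.smul_fst, Prod.smul_snd, smul_eq_mul]
    have e1 : α * p.1 + β * q.1 = p.1 + β*(q.1-p.1) := by linear_combination p.1 * hαβ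
    have e2 : α * p.2 + β * q.2 = p.2 + β*(q.2-p.2) := by linear_combination p.2 * hαβ
    rw [e1, e2]
    exact hineq
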